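/- Let Λ ⊆ ℤ^d be a finite set that is connected as a subgraph of the nearest-neighbour graph on ℤ^d, let j ∈ Λ, y ∈ ℝ^m, a > 0 and p > 0. Then ∫_{(ℝ^m)^Λ} 1{|X(j)-y| < 1} · exp(−a Σ_{i∈Λ} Σ_{k=1}^d |X(i+e_k) − X(i)|^p) Π_{i∈Λ} dX(i) ≤ ω(m) · (a^{−m/p} c(p,m))^{|Λ|−1}, where ω(m) is the volume of the unit ball in ℝ^m and c(p,m) = ∫_{ℝ^m} exp(−|ξ|^p) dξ. -/
import Mathlib

open scoped BigOperators ENNReal NNReal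
open MeasureTheory

section Aux

open Finset

theorem master_tree_lintegral {ι : Type*} [Fintype ι] [DecidableEq ι]
    {E : Type*} [MeasurableSpace E] [AddGroup E] [MeasurableSub₂ E] [Nonempty E]
    (μ : Measure E) [SigmaFinite μ]
    (j : ι) (par : ι → ι) (hparj : par j = j) (dep : ι → ℕ)
    (hdep : ∀ i, i ≠ j → dep (par i) < dep i)
    (F0 F : E → ℝ≥0∞) (hF0 : Measurable F0) (hF : Measurable F)
    (htrans : ∀ c : E, ∫⁻ x, F (x - c) ∂μ = ∫⁻ x, F x ∂μ) :
    ∫⁻ X : ι → E, F0 (X j) * ∏ i ∈ Finset.univ.erase j, F (X i - X (par i))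
        ∂(Measure.pi fun _ => μ)
      ≤ (∫⁻ x, F0 x ∂μ) * (∫⁻ x, F x ∂μ) ^ (Fintype.card ι - 1) := by
  classical
  set I := ∫⁻ x, F x ∂μ with hI
  set f : (ι → E) → ℝ≥0∞ :=
    fun X => F0 (X j) * ∏ i ∈ Finset.univ.erase j, F (X i - X (par i)) with hfdef
  have hfm : Measurable f := by
    exact (hF0.comp (measurable_pi_apply j)).mul
      (Finset.measurable_prod _ fun i _ =>
        hF.comp ((measurable_pi_apply i).sub (measurable_pi_apply (par i))))
  have claim : ∀ s : Finset ι, j ∉ s → (∀ i, par i ∈ s → i ∈ s) → ∀ X : ι → E,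
      (∫⋯∫⁻_s, f ∂fun _ => μ) X
        ≤ F0 (X j) * I ^ s.card * ∏ i ∈ Finset.univ.erase j \ s, F (X i - X (par i)) := by
    intro s
    induction s using Finset.strongInduction with
    | _ s IH =>
      intro hjs hcl X
      rcases s.eq_empty_or_nonempty with rfl | hne
      · simp [f, mul_assoc]
      · obtain ⟨i₀, hi₀s, hmin⟩ := s.exists_min_image dep hne
        have hij : i₀ ≠ j := fun h => hjs (h ▸ hi₀s)
        have hpar₀ : par i₀ ∉ s := fun hmem =>
          absurd (hmin _ hmem) (not_le.mpr (hdep i₀ hij))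
        have hpar₀' : par i₀ ≠ i₀ := fun h => hpar₀ (by rw [h]; exact hi₀s)
        set s' := s.erase i₀ with hs'
        have hsub : s' ⊂ s := Finset.erase_ssubset hi₀s
        have hjs' : j ∉ s' := fun h => hjs (Finset.mem_of_mem_erase h)
        have hcl' : ∀ i, par i ∈ s' → i ∈ s' := by
          intro i hi
          have his : i ∈ s := hcl i (Finset.mem_of_mem_erase hi)
          refine Finset.mem_erase.mpr ⟨?_, his⟩
          rintro rfl
          exact hpar₀ (Finset.mem_of_mem_erase hi)
        have hAsplit : Finset.univ.erase j \ s' = insert i₀ (Finset.univ.erase j \ s) := by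
          ext x
          simp only [Finset.mem_sdiff, Finset.mem_erase, Finset.mem_insert, Finset.mem_univ,
            true_and, hs', and_true, not_and]
          constructor
          · rintro ⟨hxj, hx⟩
            by_cases hxi : x = i₀
            · exact Or.inl hxi
            · exact Or.inr ⟨hxj, fun hxs => (hx (fun h => hxi h) hxs)⟩
          · rintro (rfl | ⟨hxj, hxs⟩)
            · exact ⟨hij, fun h => absurd rfl h⟩
            · exact ⟨hxj, fun _ h => hxs h⟩
        have hi₀notA : i₀ ∉ Finset.univ.erase j \ s := by
          simp [Finset.mem_sdiff, hi₀s]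
        rw [lmarginal_erase _ hfm hi₀s X]
        have hcard : s'.card + 1 = s.card := Finset.card_erase_add_one hi₀s
        calc ∫⁻ xᵢ, (∫⋯∫⁻_s', f ∂fun _ => μ) (Function.update X i₀ xᵢ) ∂μ
            ≤ ∫⁻ xᵢ, (F0 (X j) * I ^ s'.card *
                ∏ i ∈ Finset.univ.erase j \ s, F (X i - X (par i)))
                  * F (xᵢ - X (par i₀)) ∂μ := by
              apply lintegral_mono
              intro xᵢ
              refine le_trans (IH s' hsub hjs' hcl' _) (le_of_eq ?_)
              rw [Function.update_of_ne (Ne.symm hij)]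
              rw [hAsplit, Finset.prod_insert hi₀notA]
              rw [Function.update_self, Function.update_of_ne hpar₀']
              have : ∀ i ∈ Finset.univ.erase j \ s,
                  F (Function.update X i₀ xᵢ i - Function.update X i₀ xᵢ (par i))
                    = F (X i - X (par i)) := by
                intro i hi
                have hi1 : i ≠ i₀ := by
                  rintro rfl; exact (Finset.mem_sdiff.mp hi).2 hi₀s
                have hi2 : par i ≠ i₀ := by
                  intro h
                  exact (Finset.mem_sdiff.mp hi).2 (hcl i (h ▸ hi₀s))
                rw [Function.update_of_ne hi1, Function.update_of_ne hi2]
              rw [Finset.prod_congr rfl this]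
              ring
          _ = (F0 (X j) * I ^ s'.card *
                ∏ i ∈ Finset.univ.erase j \ s, F (X i - X (par i))) * I := by
              have hmeas : Measurable fun x : E => F (x - X (par i₀)) :=
                hF.comp (measurable_id.sub measurable_const)
              rw [lintegral_const_mul _ hmeas, htrans]
          _ = F0 (X j) * I ^ s.card * ∏ i ∈ Finset.univ.erase j \ s, F (X i - X (par i)) := by
              rw [← hcard]; ring
  have X₀ : ι → E := fun _ => Classical.arbitrary E
  rw [lintegral_eq_lmarginal_univ (μ := fun _ : ι => μ) X₀]
  rw [lmarginal_erase _ hfm (Finset.mem_univ j) X₀]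
  have hclosure : ∀ i, par i ∈ Finset.univ.erase j → i ∈ Finset.univ.erase j := by
    intro i hi
    refine Finset.mem_erase.mpr ⟨?_, Finset.mem_univ i⟩
    rintro rfl
    rw [hparj] at hi
    exact (Finset.notMem_erase _ _) hi
  have hcarde : (Finset.univ.erase j).card = Fintype.card ι - 1 := by
    rw [Finset.card_erase_of_mem (Finset.mem_univ j), Finset.card_univ]
  calc ∫⁻ x, (∫⋯∫⁻_(Finset.univ.erase j), f ∂fun _ => μ) (Function.update X₀ j x) ∂μ
      ≤ ∫⁻ x, F0 x * I ^ (Fintype.card ι - 1) ∂μ := by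
        apply lintegral_mono
        intro x
        refine le_trans (claim _ (Finset.notMem_erase j _) hclosure _) (le_of_eq ?_)
        rw [Function.update_self, Finset.sdiff_self, Finset.prod_empty, mul_one, hcarde]
    _ = (∫⁻ x, F0 x ∂μ) * I ^ (Fintype.card ι - 1) :=
        lintegral_mul_const _ hF0

theorem aux_exp_integrable (m : ℕ) {b p : ℝ} (hb : 0 < b) (hp : 0 < p) :
    Integrable (fun x : EuclideanSpace ℝ (Fin m) => Real.exp (-(b * ‖x‖ ^ p))) := by
  obtain ⟨k, hk⟩ := exists_nat_ge (((m : ℝ) + 1) / p)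
  have hkp : (m : ℝ) + 1 ≤ k * p := by
    rw [div_le_iff₀ hp] at hk; linarith
  set q : ℝ := (k.factorial : ℝ) / b ^ k with hq
  have hq0 : 0 ≤ q := by positivity
  set C : ℝ := 2 ^ ((m : ℝ) + 1) * (1 + q) with hC
  have hA : (0:ℝ) < 2 ^ ((m : ℝ) + 1) := Real.rpow_pos_of_pos (by norm_num) _
  have hmeas : Measurable fun x : EuclideanSpace ℝ (Fin m) => Real.exp (-(b * ‖x‖ ^ p)) := by
    have h1 : Continuous fun x : EuclideanSpace ℝ (Fin m) => ‖x‖ ^ p :=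
      (Real.continuous_rpow_const hp.le).comp continuous_norm
    exact (Real.continuous_exp.comp ((continuous_const.mul h1).neg)).measurable
  have key : ∀ t : ℝ, 0 ≤ t →
      (1 + t) ^ ((m : ℝ) + 1) ≤ C * Real.exp (b * t ^ p) := by
    intro t ht
    have hs : 0 ≤ t ^ p := Real.rpow_nonneg ht p
    have hexp1 : (1:ℝ) ≤ Real.exp (b * t ^ p) := Real.one_le_exp (by positivity)
    have hb' : (0:ℝ) < b ^ k := pow_pos hb k
    have hf' : (0:ℝ) < (k.factorial : ℝ) := Nat.cast_pos.mpr k.factorial_pos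
    rcases le_total t 1 with h1 | h1
    · have h2 : (1 + t) ^ ((m : ℝ) + 1) ≤ 2 ^ ((m : ℝ) + 1) :=
        Real.rpow_le_rpow (by linarith) (by linarith) (by positivity)
      nlinarith [mul_nonneg hA.le hq0, mul_le_mul_of_nonneg_left hexp1 (mul_nonneg hA.le hq0),
        mul_le_mul_of_nonneg_left hexp1 hA.le]
    · have h4 : t ^ (p * (k:ℝ)) ≤ Real.exp (b * t ^ p) * (k.factorial : ℝ) / b ^ k := by
        have h3 : (b * t ^ p) ^ k / (k.factorial : ℝ) ≤ Real.exp (b * t ^ p) :=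
          Real.pow_div_factorial_le_exp (x := b * t ^ p) (by positivity) k
        rw [div_le_iff₀ hf', mul_pow] at h3
        rw [Real.rpow_mul ht, Real.rpow_natCast, le_div_iff₀ hb']
        nlinarith [h3]
      calc (1 + t) ^ ((m : ℝ) + 1)
          ≤ (2 * t) ^ ((m : ℝ) + 1) :=
            Real.rpow_le_rpow (by linarith) (by linarith) (by positivity)
        _ = 2 ^ ((m : ℝ) + 1) * t ^ ((m : ℝ) + 1) := Real.mul_rpow (by norm_num) ht
        _ ≤ 2 ^ ((m : ℝ) + 1) * t ^ (p * (k:ℝ)) := by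
            have h6 : t ^ ((m : ℝ) + 1) ≤ t ^ (p * (k:ℝ)) :=
              Real.rpow_le_rpow_of_exponent_le h1 (by nlinarith)
            exact mul_le_mul_of_nonneg_left h6 hA.le
        _ ≤ 2 ^ ((m : ℝ) + 1) * (Real.exp (b * t ^ p) * (k.factorial : ℝ) / b ^ k) :=
            mul_le_mul_of_nonneg_left h4 hA.le
        _ ≤ C * Real.exp (b * t ^ p) := by
            rw [hC, hq]
            have heq : (2:ℝ) ^ ((m : ℝ) + 1) * (Real.exp (b * t ^ p) * (k.factorial : ℝ) / b ^ k)
                = 2 ^ ((m : ℝ) + 1) * ((k.factorial : ℝ) / b ^ k) * Real.exp (b * t ^ p) := by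
              ring
            rw [heq]
            have h5 : (k.factorial : ℝ) / b ^ k ≤ 1 + (k.factorial : ℝ) / b ^ k := by linarith
            nlinarith [Real.exp_pos (b * t ^ p), mul_le_mul_of_nonneg_left h5 hA.le]
  have hint : Integrable fun x : EuclideanSpace ℝ (Fin m) =>
      C * (1 + ‖x‖) ^ (-((m : ℝ) + 1)) := by
    refine (integrable_one_add_norm ?_).const_mul C
    rw [finrank_euclideanSpace_fin]; linarith
  refine hint.mono' hmeas.aestronglyMeasurable ?_
  filter_upwards with x
  have ht : (0:ℝ) ≤ ‖x‖ := norm_nonneg x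
  have h2 : (0:ℝ) < 1 + ‖x‖ := by linarith
  rw [Real.norm_eq_abs, abs_of_pos (Real.exp_pos _)]
  rw [Real.rpow_neg h2.le, Real.exp_neg, ← div_eq_mul_inv,
    le_div_iff₀ (Real.rpow_pos_of_pos h2 _)]
  rw [inv_mul_le_iff₀ (Real.exp_pos _)]
  calc (1 + ‖x‖) ^ ((m : ℝ) + 1) ≤ C * Real.exp (b * ‖x‖ ^ p) := key ‖x‖ ht
    _ = Real.exp (b * ‖x‖ ^ p) * C := mul_comm _ _

theorem aux_scaling (m : ℕ) {a p : ℝ} (ha : 0 < a) (hp : 0 < p) :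
    ∫ x : EuclideanSpace ℝ (Fin m), Real.exp (-(a * ‖x‖ ^ p))
      = a ^ (-(m : ℝ) / p) * ∫ ξ : EuclideanSpace ℝ (Fin m), Real.exp (-‖ξ‖ ^ p) := by
  set R : ℝ := a ^ (p⁻¹) with hR
  have hR0 : 0 < R := Real.rpow_pos_of_pos ha _
  have h := MeasureTheory.Measure.integral_comp_smul_of_nonneg (μ := volume)
    (f := fun ξ : EuclideanSpace ℝ (Fin m) => Real.exp (-‖ξ‖ ^ p)) (R := R) (hR := hR0.le)
  have hRp : R ^ p = a := by
    rw [hR, ← Real.rpow_mul ha.le, inv_mul_cancel₀ hp.ne', Real.rpow_one]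
  have hL : (fun x : EuclideanSpace ℝ (Fin m) => Real.exp (-‖R • x‖ ^ p))
      = fun x : EuclideanSpace ℝ (Fin m) => Real.exp (-(a * ‖x‖ ^ p)) := by
    funext x
    congr 1
    rw [norm_smul, Real.norm_eq_abs, abs_of_pos hR0,
      Real.mul_rpow hR0.le (norm_nonneg x), hRp]
  have hfin : (R ^ Module.finrank ℝ (EuclideanSpace ℝ (Fin m)))⁻¹ = a ^ (-(m : ℝ) / p) := by
    rw [finrank_euclideanSpace_fin, hR, ← Real.rpow_natCast (a ^ (p⁻¹)) m,
      ← Real.rpow_mul ha.le, ← Real.rpow_neg ha.le]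
    congr 1
    field_simp
  rw [hL] at h
  rw [h, hfin, smul_eq_mul]

theorem aux_step_vec {d : ℕ} {u v : Fin d → ℤ} (h : ∑ k, |u k - v k| = 1) :
    ∃ k₀ : Fin d, v = u + Pi.single k₀ 1 ∨ u = v + Pi.single k₀ 1 := by
  classical
  have hnn : ∀ k : Fin d, (0:ℤ) ≤ |u k - v k| := fun k => abs_nonneg _
  have hex : ∃ k₀ : Fin d, 0 < |u k₀ - v k₀| := by
    by_contra hc
    push_neg at hc
    have hz : ∀ k ∈ Finset.univ, |u k - v k| = 0 := fun k _ => le_antisymm (hc k) (hnn k)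
    rw [Finset.sum_eq_zero hz] at h
    exact one_ne_zero h.symm
  obtain ⟨k₀, hk₀⟩ := hex
  have hsplit : |u k₀ - v k₀| + ∑ k ∈ Finset.univ.erase k₀, |u k - v k| = 1 := by
    have h2 := Finset.add_sum_erase Finset.univ (fun k => |u k - v k|) (Finset.mem_univ k₀)
    exact h2.trans h
  have hnn2 : 0 ≤ ∑ k ∈ Finset.univ.erase k₀, |u k - v k| :=
    Finset.sum_nonneg fun k _ => hnn k
  have habs : |u k₀ - v k₀| = 1 := by omega
  have hsz : ∑ k ∈ Finset.univ.erase k₀, |u k - v k| = 0 := by omega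
  have hzero : ∀ k ∈ Finset.univ.erase k₀, |u k - v k| = 0 :=
    (Finset.sum_eq_zero_iff_of_nonneg fun k _ => hnn k).mp hsz
  have hrest : ∀ k, k ≠ k₀ → u k = v k := by
    intro k hk
    have h0 := hzero k (Finset.mem_erase.mpr ⟨hk, Finset.mem_univ k⟩)
    have h1 := abs_eq_zero.mp h0
    omega
  rcases (abs_eq (by norm_num : (0:ℤ) ≤ 1)).mp habs with hcase | hcase
  · refine ⟨k₀, Or.inr ?_⟩
    funext k
    by_cases hk : k = k₀
    · subst hk
      simp only [Pi.add_apply, Pi.single_eq_same]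
      omega
    · simp only [Pi.add_apply, Pi.single_eq_of_ne hk]
      have := hrest k hk
      omega
  · refine ⟨k₀, Or.inl ?_⟩
    funext k
    by_cases hk : k = k₀
    · subst hk
      simp only [Pi.add_apply, Pi.single_eq_same]
      omega
    · simp only [Pi.add_apply, Pi.single_eq_of_ne hk]
      have := hrest k hk
      omega

end Aux

set_option maxHeartbeats 1000000 in
/-- Tree-integration bound on a connected finite `Λ ⊆ ℤ^d` (Lemma A.1(a)):
the partition-function-type integral with the root variable `X(j)` clamped to the unit
ball around `y` is bounded by `ω(m) (a^{-m/p} c(p,m))^{|Λ|-1}`. -/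
theorem stmt_3 (d m : ℕ) (hd : 0 < d) (hm : 0 < m)
    (Λ : Finset (Fin d → ℤ))
    (hconn : (SimpleGraph.fromRel
      (fun u v : ↥Λ => ∑ k, |(u : Fin d → ℤ) k - (v : Fin d → ℤ) k| = 1)).Connected)
    (j : ↥Λ) (y : EuclideanSpace ℝ (Fin m)) (a p : ℝ) (ha : 0 < a) (hp : 0 < p) :
    ∫ X : ↥Λ → EuclideanSpace ℝ (Fin m),
      Set.indicator {X : ↥Λ → EuclideanSpace ℝ (Fin m) | ‖X j - y‖ < 1}
        (fun X => Real.exp (-(a * ∑ i : ↥Λ, ∑ k : Fin d,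
          (if h : ((i : Fin d → ℤ) + Pi.single k 1) ∈ Λ
            then ‖X ⟨(i : Fin d → ℤ) + Pi.single k 1, h⟩ - X i‖ ^ p else 0)))) X
    ≤ (volume (Metric.ball (0 : EuclideanSpace ℝ (Fin m)) 1)).toReal *
        (a ^ (-(m : ℝ) / p) *
          ∫ ξ : EuclideanSpace ℝ (Fin m), Real.exp (-‖ξ‖ ^ p)) ^ (Λ.card - 1) := by
  classical
  set G := SimpleGraph.fromRel
    (fun u v : ↥Λ => ∑ k, |(u : Fin d → ℤ) k - (v : Fin d → ℤ) k| = 1) with hG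
  -- the parent map of a BFS tree rooted at `j`
  have key : ∀ i : ↥Λ, i ≠ j → ∃ v : ↥Λ, G.Adj i v ∧ G.dist v j < G.dist i j := by
    intro i hi
    obtain ⟨w, hw⟩ := hconn.exists_walk_length_eq_dist i j
    cases w with
    | nil => exact absurd rfl hi
    | @cons _ b _ hadj q =>
      refine ⟨b, hadj, ?_⟩
      have h1 := SimpleGraph.dist_le q
      rw [SimpleGraph.Walk.length_cons] at hw
      omega
  let par : ↥Λ → ↥Λ := fun i => if h : i = j then j else (key i h).choose
  have hparj : par j = j := by simp [par]
  have hadj : ∀ i, i ≠ j → G.Adj i (par i) := by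
    intro i h; simp only [par, dif_neg h]; exact (key i h).choose_spec.1
  have hdep : ∀ i, i ≠ j → G.dist (par i) j < G.dist i j := by
    intro i h; simp only [par, dif_neg h]; exact (key i h).choose_spec.2
  have hedge : ∀ i : ↥Λ, i ≠ j → ∃ k₀ : Fin d,
      ((par i : Fin d → ℤ) = (i : Fin d → ℤ) + Pi.single k₀ 1 ∨
       (i : Fin d → ℤ) = (par i : Fin d → ℤ) + Pi.single k₀ 1) := by
    intro i h
    have hA := hadj i h
    rw [hG, SimpleGraph.fromRel_adj] at hA
    have hsum : ∑ k, |(i : Fin d → ℤ) k - (par i : Fin d → ℤ) k| = 1 := by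
      rcases hA.2 with h1 | h1
      · exact h1
      · calc ∑ k, |(i : Fin d → ℤ) k - (par i : Fin d → ℤ) k|
            = ∑ k, |(par i : Fin d → ℤ) k - (i : Fin d → ℤ) k| := by
              apply Finset.sum_congr rfl; intro k _; rw [abs_sub_comm]
          _ = 1 := h1
    exact aux_step_vec hsum
  let κ : ↥Λ → Fin d := fun i => if h : i = j then ⟨0, hd⟩ else (hedge i h).choose
  have hκ : ∀ i, (h : i ≠ j) →
      ((par i : Fin d → ℤ) = (i : Fin d → ℤ) + Pi.single (κ i) 1 ∨
       (i : Fin d → ℤ) = (par i : Fin d → ℤ) + Pi.single (κ i) 1) := by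
    intro i h; simp only [κ, dif_neg h]; exact (hedge i h).choose_spec
  -- the key pointwise sum bound
  have hsum_bound : ∀ X : ↥Λ → EuclideanSpace ℝ (Fin m),
      ∑ i ∈ Finset.univ.erase j, ‖X i - X (par i)‖ ^ p ≤
      ∑ i : ↥Λ, ∑ k : Fin d,
        (if h : ((i : Fin d → ℤ) + Pi.single k 1) ∈ Λ
          then ‖X ⟨(i : Fin d → ℤ) + Pi.single k 1, h⟩ - X i‖ ^ p else 0) := by
    intro X
    set T : ↥Λ × Fin d → ℝ := fun q =>
      (if h : ((q.1 : Fin d → ℤ) + Pi.single q.2 1) ∈ Λ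
        then ‖X ⟨(q.1 : Fin d → ℤ) + Pi.single q.2 1, h⟩ - X q.1‖ ^ p else 0) with hT
    have hTnn : ∀ q, 0 ≤ T q := by
      intro q; rw [hT]; dsimp only; split
      · exact Real.rpow_nonneg (norm_nonneg _) p
      · exact le_refl 0
    set φ : ↥Λ → ↥Λ × Fin d := fun i =>
      if h : i = j then (i, ⟨0, hd⟩)
      else if (par i : Fin d → ℤ) = (i : Fin d → ℤ) + Pi.single (κ i) 1
        then (i, κ i) else (par i, κ i) with hφ
    have hφval : ∀ i ∈ Finset.univ.erase j, T (φ i) = ‖X i - X (par i)‖ ^ p := by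
      intro i hi
      have h : i ≠ j := (Finset.mem_erase.mp hi).1
      by_cases hcond : (par i : Fin d → ℤ) = (i : Fin d → ℤ) + Pi.single (κ i) 1
      · have hφi : φ i = (i, κ i) := by simp only [hφ]; rw [dif_neg h, if_pos hcond]
        rw [hφi, hT]
        dsimp only
        have hmem : ((i : Fin d → ℤ) + Pi.single (κ i) 1) ∈ Λ := by
          rw [← hcond]; exact (par i).2
        rw [dif_pos hmem]
        have heq : (⟨(i : Fin d → ℤ) + Pi.single (κ i) 1, hmem⟩ : ↥Λ) = par i :=
          Subtype.ext hcond.symm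
        rw [heq, norm_sub_rev]
      · have hc : (i : Fin d → ℤ) = (par i : Fin d → ℤ) + Pi.single (κ i) 1 :=
          (hκ i h).resolve_left hcond
        have hφi : φ i = (par i, κ i) := by simp only [hφ]; rw [dif_neg h, if_neg hcond]
        rw [hφi, hT]
        dsimp only
        have hmem : ((par i : Fin d → ℤ) + Pi.single (κ i) 1) ∈ Λ := by
          rw [← hc]; exact i.2
        rw [dif_pos hmem]
        have heq : (⟨(par i : Fin d → ℤ) + Pi.single (κ i) 1, hmem⟩ : ↥Λ) = i :=
          Subtype.ext hc.symm
        rw [heq]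
    have hinj : ∀ i₁ ∈ Finset.univ.erase j, ∀ i₂ ∈ Finset.univ.erase j,
        φ i₁ = φ i₂ → i₁ = i₂ := by
      intro i₁ h₁ i₂ h₂ heq
      have hn₁ : i₁ ≠ j := (Finset.mem_erase.mp h₁).1
      have hn₂ : i₂ ≠ j := (Finset.mem_erase.mp h₂).1
      by_cases hc₁ : (par i₁ : Fin d → ℤ) = (i₁ : Fin d → ℤ) + Pi.single (κ i₁) 1 <;>
        by_cases hc₂ : (par i₂ : Fin d → ℤ) = (i₂ : Fin d → ℤ) + Pi.single (κ i₂) 1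
      · rw [show φ i₁ = (i₁, κ i₁) by simp only [hφ]; rw [dif_neg hn₁, if_pos hc₁],
          show φ i₂ = (i₂, κ i₂) by simp only [hφ]; rw [dif_neg hn₂, if_pos hc₂]] at heq
        exact (Prod.mk.injEq _ _ _ _ ▸ heq).1
      · have hd₂ : (i₂ : Fin d → ℤ) = (par i₂ : Fin d → ℤ) + Pi.single (κ i₂) 1 :=
          (hκ i₂ hn₂).resolve_left hc₂
        rw [show φ i₁ = (i₁, κ i₁) by simp only [hφ]; rw [dif_neg hn₁, if_pos hc₁],
          show φ i₂ = (par i₂, κ i₂) by simp only [hφ]; rw [dif_neg hn₂, if_neg hc₂]] at heq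
        obtain ⟨he1, he2⟩ := Prod.mk.injEq _ _ _ _ ▸ heq
        exfalso
        have h3 : i₂ = par i₁ := by
          apply Subtype.ext
          rw [hd₂, ← he1, ← he2, ← hc₁]
        have h4 := hdep i₁ hn₁
        have h5 := hdep i₂ hn₂
        rw [← h3] at h4
        rw [← he1] at h5
        omega
      · have hd₁ : (i₁ : Fin d → ℤ) = (par i₁ : Fin d → ℤ) + Pi.single (κ i₁) 1 :=
          (hκ i₁ hn₁).resolve_left hc₁
        rw [show φ i₁ = (par i₁, κ i₁) by simp only [hφ]; rw [dif_neg hn₁, if_neg hc₁],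
          show φ i₂ = (i₂, κ i₂) by simp only [hφ]; rw [dif_neg hn₂, if_pos hc₂]] at heq
        obtain ⟨he1, he2⟩ := Prod.mk.injEq _ _ _ _ ▸ heq
        exfalso
        have h3 : i₁ = par i₂ := by
          apply Subtype.ext
          rw [hd₁, he1, he2, ← hc₂]
        have h4 := hdep i₁ hn₁
        have h5 := hdep i₂ hn₂
        rw [he1] at h4
        rw [← h3] at h5
        omega
      · have hd₁ : (i₁ : Fin d → ℤ) = (par i₁ : Fin d → ℤ) + Pi.single (κ i₁) 1 :=
          (hκ i₁ hn₁).resolve_left hc₁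
        have hd₂ : (i₂ : Fin d → ℤ) = (par i₂ : Fin d → ℤ) + Pi.single (κ i₂) 1 :=
          (hκ i₂ hn₂).resolve_left hc₂
        rw [show φ i₁ = (par i₁, κ i₁) by simp only [hφ]; rw [dif_neg hn₁, if_neg hc₁],
          show φ i₂ = (par i₂, κ i₂) by simp only [hφ]; rw [dif_neg hn₂, if_neg hc₂]] at heq
        obtain ⟨he1, he2⟩ := Prod.mk.injEq _ _ _ _ ▸ heq
        apply Subtype.ext
        rw [hd₁, hd₂, he1, he2]
    calc ∑ i ∈ Finset.univ.erase j, ‖X i - X (par i)‖ ^ p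
        = ∑ i ∈ Finset.univ.erase j, T (φ i) := (Finset.sum_congr rfl hφval).symm
      _ = ∑ q ∈ (Finset.univ.erase j).image φ, T q := (Finset.sum_image hinj).symm
      _ ≤ ∑ q ∈ Finset.univ, T q :=
          Finset.sum_le_sum_of_subset_of_nonneg (Finset.subset_univ _) fun q _ _ => hTnn q
      _ = ∑ i : ↥Λ, ∑ k : Fin d,
          (if h : ((i : Fin d → ℤ) + Pi.single k 1) ∈ Λ
            then ‖X ⟨(i : Fin d → ℤ) + Pi.single k 1, h⟩ - X i‖ ^ p else 0) := by
          exact Fintype.sum_prod_type (f := T)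
  -- measure-theoretic setup
  set F0 : EuclideanSpace ℝ (Fin m) → ℝ≥0∞ :=
    (Metric.ball y 1).indicator (1 : EuclideanSpace ℝ (Fin m) → ℝ≥0∞) with hF0def
  set F : EuclideanSpace ℝ (Fin m) → ℝ≥0∞ :=
    fun ξ => ENNReal.ofReal (Real.exp (-(a * ‖ξ‖ ^ p))) with hFdef
  have hF0m : Measurable F0 := measurable_const.indicator measurableSet_ball
  have hFm : Measurable F := by
    have h1 : Continuous fun ξ : EuclideanSpace ℝ (Fin m) => Real.exp (-(a * ‖ξ‖ ^ p)) :=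
      Real.continuous_exp.comp
        ((continuous_const.mul ((Real.continuous_rpow_const hp.le).comp continuous_norm)).neg)
    exact h1.measurable.ennreal_ofReal
  have htrans : ∀ c : EuclideanSpace ℝ (Fin m), ∫⁻ x, F (x - c) = ∫⁻ x, F x := fun c =>
    lintegral_sub_right_eq_self F c
  have hSm : Measurable fun X : ↥Λ → EuclideanSpace ℝ (Fin m) =>
      ∑ i : ↥Λ, ∑ k : Fin d,
        (if h : ((i : Fin d → ℤ) + Pi.single k 1) ∈ Λ
          then ‖X ⟨(i : Fin d → ℤ) + Pi.single k 1, h⟩ - X i‖ ^ p else 0) := by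
    apply Finset.measurable_sum
    intro i _
    apply Finset.measurable_sum
    intro k _
    by_cases h : ((i : Fin d → ℤ) + Pi.single k 1) ∈ Λ
    · simp only [dif_pos h]
      have hsub : Measurable fun X : ↥Λ → EuclideanSpace ℝ (Fin m) =>
          X ⟨(i : Fin d → ℤ) + Pi.single k 1, h⟩ - X i :=
        (measurable_pi_apply _).sub (measurable_pi_apply _)
      exact (Real.continuous_rpow_const hp.le).measurable.comp hsub.norm
    · simp only [dif_neg h]; exact measurable_const
  have hset : MeasurableSet {X : ↥Λ → EuclideanSpace ℝ (Fin m) | ‖X j - y‖ < 1} := by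
    have hm1 : Measurable fun X : ↥Λ → EuclideanSpace ℝ (Fin m) => ‖X j - y‖ :=
      ((measurable_pi_apply j).sub measurable_const).norm
    exact measurableSet_lt hm1 measurable_const
  set g : (↥Λ → EuclideanSpace ℝ (Fin m)) → ℝ :=
    Set.indicator {X : ↥Λ → EuclideanSpace ℝ (Fin m) | ‖X j - y‖ < 1}
      (fun X => Real.exp (-(a * ∑ i : ↥Λ, ∑ k : Fin d,
        (if h : ((i : Fin d → ℤ) + Pi.single k 1) ∈ Λ
          then ‖X ⟨(i : Fin d → ℤ) + Pi.single k 1, h⟩ - X i‖ ^ p else 0)))) with hg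
  have hgm : Measurable g :=
    (Real.continuous_exp.measurable.comp ((hSm.const_mul a).neg)).indicator hset
  have hgnn : ∀ X, 0 ≤ g X := fun X =>
    Set.indicator_nonneg (fun _ _ => (Real.exp_pos _).le) X
  rw [integral_eq_lintegral_of_nonneg_ae (Filter.Eventually.of_forall hgnn)
    hgm.aestronglyMeasurable]
  have hpoint : ∀ X : ↥Λ → EuclideanSpace ℝ (Fin m),
      ENNReal.ofReal (g X) ≤ F0 (X j) * ∏ i ∈ Finset.univ.erase j, F (X i - X (par i)) := by
    intro X
    by_cases hX : X ∈ {X : ↥Λ → EuclideanSpace ℝ (Fin m) | ‖X j - y‖ < 1}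
    · rw [hg, Set.indicator_of_mem hX]
      have hF0one : F0 (X j) = 1 := by
        rw [hF0def]
        exact Set.indicator_of_mem (by simpa [Metric.mem_ball, dist_eq_norm] using hX) _
      rw [hF0one, one_mul]
      have h1 : Real.exp (-(a * ∑ i : ↥Λ, ∑ k : Fin d,
            (if h : ((i : Fin d → ℤ) + Pi.single k 1) ∈ Λ
              then ‖X ⟨(i : Fin d → ℤ) + Pi.single k 1, h⟩ - X i‖ ^ p else 0)))
          ≤ Real.exp (-(a * ∑ i ∈ Finset.univ.erase j, ‖X i - X (par i)‖ ^ p)) := by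
        apply Real.exp_le_exp.mpr
        apply neg_le_neg
        exact mul_le_mul_of_nonneg_left (hsum_bound X) ha.le
      have h2 : Real.exp (-(a * ∑ i ∈ Finset.univ.erase j, ‖X i - X (par i)‖ ^ p))
          = ∏ i ∈ Finset.univ.erase j, Real.exp (-(a * ‖X i - X (par i)‖ ^ p)) := by
        rw [← Real.exp_sum]
        congr 1
        rw [Finset.mul_sum, ← Finset.sum_neg_distrib]
      refine le_trans (ENNReal.ofReal_le_ofReal h1) (le_of_eq ?_)
      rw [h2, ENNReal.ofReal_prod_of_nonneg (fun i _ => (Real.exp_pos _).le)]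
    · rw [hg, Set.indicator_of_notMem hX]
      simp
  have hIF0 : ∫⁻ x, F0 x = volume (Metric.ball (0 : EuclideanSpace ℝ (Fin m)) 1) := by
    rw [hF0def, lintegral_indicator_one measurableSet_ball, Measure.addHaar_ball_center]
  have hIF : ∫⁻ x, F x = ENNReal.ofReal
      (a ^ (-(m : ℝ) / p) * ∫ ξ : EuclideanSpace ℝ (Fin m), Real.exp (-‖ξ‖ ^ p)) := by
    rw [hFdef,
      ← MeasureTheory.ofReal_integral_eq_lintegral_ofReal (aux_exp_integrable m ha hp)
        (Filter.Eventually.of_forall fun x => (Real.exp_pos _).le),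
      aux_scaling m ha hp]
  have hmain : ∫⁻ X, ENNReal.ofReal (g X) ≤
      (∫⁻ x, F0 x) * (∫⁻ x, F x) ^ (Λ.card - 1) := by
    calc ∫⁻ X, ENNReal.ofReal (g X)
        ≤ ∫⁻ X : ↥Λ → EuclideanSpace ℝ (Fin m),
            F0 (X j) * ∏ i ∈ Finset.univ.erase j, F (X i - X (par i)) :=
          lintegral_mono hpoint
      _ ≤ (∫⁻ x, F0 x) * (∫⁻ x, F x) ^ (Fintype.card ↥Λ - 1) := by
          rw [MeasureTheory.volume_pi]
          exact master_tree_lintegral volume j par hparj (fun i => G.dist i j) hdep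
            F0 F hF0m hFm htrans
      _ = (∫⁻ x, F0 x) * (∫⁻ x, F x) ^ (Λ.card - 1) := by rw [Fintype.card_coe]
  have hne : (∫⁻ x, F0 x) * (∫⁻ x, F x) ^ (Λ.card - 1) ≠ ⊤ := by
    rw [hIF0, hIF]
    exact ENNReal.mul_ne_top measure_ball_lt_top.ne (ENNReal.pow_ne_top ENNReal.ofReal_ne_top)
  refine le_trans (ENNReal.toReal_mono hne hmain) (le_of_eq ?_)
  rw [hIF0, hIF, ENNReal.toReal_mul, ENNReal.toReal_pow, ENNReal.toReal_ofReal]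
  exact mul_nonneg (Real.rpow_nonneg ha.le _)
    (integral_nonneg fun ξ => (Real.exp_pos _).le)
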